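/- In every finite bipartite graph there exists a matching that covers every node of maximum degree. -/

import Mathlib

set_option maxHeartbeats 1000000


/-- Degree of a node `v` with respect to an edge set `E` (edges as ordered pairs). -/
def bipDeg {V : Type*} [DecidableEq V] (E : Finset (V × V)) (v : V) : ℕ :=
  (E.filter (fun e => e.1 = v ∨ e.2 = v)).card

/-- A set of edges is a matching if its edges are pairwise node-disjoint. -/
def IsMatching {V : Type*} (M : Finset (V × V)) : Prop :=
  ∀ e ∈ M, ∀ f ∈ M, e ≠ f → e.1 ≠ f.1 ∧ e.2 ≠ f.2 ∧ e.1 ≠ f.2 ∧ e.2 ≠ f.1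

/-- An edge set covers a node if some edge is incident to it. -/
def Covers {V : Type*} (M : Finset (V × V)) (v : V) : Prop :=
  ∃ e ∈ M, e.1 = v ∨ e.2 = v

open Finset

/-- One-sided Hall: an injective choice of neighbors for max-degree vertices on side `S`. -/
lemma side_matching {V : Type*} [DecidableEq V] [Fintype V]
    (S T : Finset V) (E : Finset (V × V))
    (hST : Disjoint S T) (hE : E ⊆ S ×ˢ T) (hEne : E.Nonempty)
    (A : Finset V) (hA : A ⊆ S)
    (hdeg : ∀ a ∈ A, ∀ u ∈ S ∪ T, bipDeg E u ≤ bipDeg E a) :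
    ∃ g : V → V, Set.InjOn g ↑A ∧ ∀ a ∈ A, (a, g a) ∈ E := by
  classical
  -- degree of a vertex in S counts only first-coordinate incidences
  have hdegS : ∀ a ∈ S, bipDeg E a = (E.filter (fun e => e.1 = a)).card := by
    intro a haS
    unfold bipDeg
    apply congrArg
    apply Finset.filter_congr
    intro e heE
    have heT : e.2 ∈ T := (Finset.mem_product.1 (hE heE)).2
    constructor
    · rintro (h | h)
      · exact h
      · exact absurd haS (Finset.disjoint_right.1 hST (h ▸ heT))
    · exact Or.inl
  -- Hall condition
  have hall : ∀ s : Finset {x // x ∈ A},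
      s.card ≤ (s.biUnion (fun a => (E.filter (fun e => e.1 = ↑a)).image Prod.snd)).card := by
    intro s
    rcases s.eq_empty_or_nonempty with rfl | ⟨a₀, ha₀⟩
    · simp
    set X : Finset V := s.image Subtype.val with hX
    set N : Finset V := s.biUnion (fun a => (E.filter (fun e => e.1 = ↑a)).image Prod.snd) with hN
    set D : ℕ := bipDeg E ↑a₀ with hD
    have hD1 : 1 ≤ D := by
      obtain ⟨e₀, he₀⟩ := hEne
      have h1 : e₀.1 ∈ S := (Finset.mem_product.1 (hE he₀)).1
      have : 1 ≤ bipDeg E e₀.1 := by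
        apply Finset.card_pos.2
        exact ⟨e₀, Finset.mem_filter.2 ⟨he₀, Or.inl rfl⟩⟩
      exact this.trans (hdeg _ a₀.2 _ (Finset.mem_union_left _ h1))
    have hXcard : X.card = s.card := Finset.card_image_of_injective s Subtype.val_injective
    have hdegX : ∀ a ∈ X, (E.filter (fun e => e.1 = a)).card = D := by
      intro a haX
      obtain ⟨a', ha's, rfl⟩ := Finset.mem_image.1 haX
      rw [← hdegS _ (hA a'.2)]
      have h1 := hdeg _ a'.2 _ (Finset.mem_union_left _ (hA a₀.2))
      have h2 := hdeg _ a₀.2 _ (Finset.mem_union_left _ (hA a'.2))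
      omega
    -- count edges out of X
    have count1 : (E.filter (fun e => e.1 ∈ X)).card = D * X.card := by
      rw [Finset.card_eq_sum_card_fiberwise (s := E.filter (fun e => e.1 ∈ X)) (f := Prod.fst) (t := X)
        (fun e he => (Finset.mem_filter.1 he).2)]
      rw [Finset.sum_congr rfl (fun a haX => ?_)]
      · rw [Finset.sum_const, smul_eq_mul, mul_comm]
      · rw [Finset.filter_filter]
        rw [show (E.filter fun e => e.1 ∈ X ∧ e.1 = a) = E.filter (fun e => e.1 = a) from
          Finset.filter_congr (fun e _ => by constructor <;> intro h <;> simp_all)]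
        exact hdegX a haX
    have sub1 : E.filter (fun e => e.1 ∈ X) ⊆ E.filter (fun e => e.2 ∈ N) := by
      intro e he
      obtain ⟨heE, heX⟩ := Finset.mem_filter.1 he
      refine Finset.mem_filter.2 ⟨heE, ?_⟩
      obtain ⟨a', ha's, ha'e⟩ := Finset.mem_image.1 heX
      exact Finset.mem_biUnion.2 ⟨a', ha's,
        Finset.mem_image.2 ⟨e, Finset.mem_filter.2 ⟨heE, ha'e.symm⟩, rfl⟩⟩
    have count2 : (E.filter (fun e => e.2 ∈ N)).card ≤ D * N.card := by
      rw [Finset.card_eq_sum_card_fiberwise (s := E.filter (fun e => e.2 ∈ N)) (f := Prod.snd) (t := N)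
        (fun e he => (Finset.mem_filter.1 he).2)]
      calc ∑ t ∈ N, ((E.filter fun e => e.2 ∈ N).filter fun e => e.2 = t).card
          ≤ ∑ _t ∈ N, D := by
            apply Finset.sum_le_sum
            intro t htN
            have htT : t ∈ T := by
              obtain ⟨a', _, ht⟩ := Finset.mem_biUnion.1 htN
              obtain ⟨e, heE, rfl⟩ := Finset.mem_image.1 ht
              exact (Finset.mem_product.1 (hE (Finset.mem_filter.1 heE).1)).2
            have h1 : ((E.filter fun e => e.2 ∈ N).filter fun e => e.2 = t).card
                ≤ bipDeg E t := by
              apply Finset.card_le_card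
              intro e he
              simp only [Finset.mem_filter] at he ⊢
              exact ⟨he.1.1, Or.inr he.2⟩
            exact h1.trans (hdeg _ a₀.2 _ (Finset.mem_union_right _ htT))
        _ = D * N.card := by rw [Finset.sum_const, smul_eq_mul, mul_comm]
    have : D * X.card ≤ D * N.card := by
      rw [← count1]
      exact (Finset.card_le_card sub1).trans count2
    have := Nat.le_of_mul_le_mul_left this hD1
    omega
  have hex : ∃ F : {x // x ∈ A} → V, Function.Injective F ∧
      ∀ x : {x // x ∈ A}, F x ∈ (E.filter (fun e => e.1 = (x:V))).image Prod.snd := by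
    rw [← Finset.all_card_le_biUnion_card_iff_exists_injective]
    exact hall
  obtain ⟨F, hFinj, hFmem⟩ := hex
  refine ⟨fun v => if h : v ∈ A then F ⟨v, h⟩ else v, ?_, ?_⟩
  · intro x hx y hy hxy
    simp only [Finset.mem_coe] at hx hy
    simp only [dif_pos hx, dif_pos hy] at hxy
    exact Subtype.ext_iff.1 (hFinj hxy)
  · intro a ha
    simp only [dif_pos ha]
    obtain ⟨e, he, h2⟩ := Finset.mem_image.1 (hFmem ⟨a, ha⟩)
    obtain ⟨heE, h1⟩ := Finset.mem_filter.1 he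
    have : e = (a, F ⟨a, ha⟩) := Prod.ext h1 h2
    exact this ▸ heE

lemma bipDeg_swap {V : Type*} [DecidableEq V] (E : Finset (V × V)) (v : V) :
    bipDeg (E.image Prod.swap) v = bipDeg E v := by
  classical
  unfold bipDeg
  rw [Finset.filter_image]
  rw [Finset.card_image_of_injective _ Prod.swap_injective]
  apply congrArg
  apply Finset.filter_congr
  intro e _
  simp [Prod.swap, or_comm]

/-- Alternating-chain predicate used to combine two one-sided matchings
(Mendelsohn–Dulmage style). -/
inductive BipChain {V : Type*} (A B : Finset V) (f g : V → V) : V → Prop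
  | base (a : V) : a ∈ A → (∀ b ∈ B, f b ≠ a) → BipChain A B f g a
  | step (a : V) : BipChain A B f g a → a ∈ A → g a ∈ B → BipChain A B f g (f (g a))

/-- In every finite bipartite graph (with at least one edge) there exists a matching
covering every node of maximum degree. -/
theorem matching_covers_max_degree {V : Type*} [DecidableEq V] [Fintype V]
    (S T : Finset V) (E : Finset (V × V))
    (hST : Disjoint S T) (hE : E ⊆ S ×ˢ T) (hEne : E.Nonempty) :
    ∃ M ⊆ E, IsMatching M ∧
      ∀ v ∈ S ∪ T, (∀ u ∈ S ∪ T, bipDeg E u ≤ bipDeg E v) → Covers M v := by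
  classical
  set A : Finset V := S.filter (fun v => ∀ u ∈ S ∪ T, bipDeg E u ≤ bipDeg E v) with hAdef
  set B : Finset V := T.filter (fun v => ∀ u ∈ S ∪ T, bipDeg E u ≤ bipDeg E v) with hBdef
  have hAS : A ⊆ S := Finset.filter_subset _ _
  have hBT : B ⊆ T := Finset.filter_subset _ _
  -- one-sided matching on S
  obtain ⟨g, hginj, hgE⟩ := side_matching S T E hST hE hEne A hAS
    (fun a ha => (Finset.mem_filter.1 ha).2)
  -- one-sided matching on T (via the swapped graph)
  have hswapE : E.image Prod.swap ⊆ T ×ˢ S := by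
    intro e he
    obtain ⟨e', he', rfl⟩ := Finset.mem_image.1 he
    have := Finset.mem_product.1 (hE he')
    exact Finset.mem_product.2 ⟨this.2, this.1⟩
  obtain ⟨f, hfinj, hfE'⟩ := side_matching T S (E.image Prod.swap) hST.symm hswapE
    (hEne.image _) B hBT
    (fun b hb u hu => by
      rw [bipDeg_swap, bipDeg_swap]
      exact (Finset.mem_filter.1 hb).2 u (by rwa [Finset.union_comm]))
  have hfE : ∀ b ∈ B, (f b, b) ∈ E := by
    intro b hb
    obtain ⟨e', he', heq⟩ := Finset.mem_image.1 (hfE' b hb)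
    have : e' = (f b, b) := by
      have := congrArg Prod.swap heq
      simpa using this
    exact this ▸ he'
  -- endpoints
  have hgT : ∀ a ∈ A, g a ∈ T := fun a ha => (Finset.mem_product.1 (hE (hgE a ha))).2
  have hfS : ∀ b ∈ B, f b ∈ S := fun b hb => (Finset.mem_product.1 (hE (hfE b hb))).1
  have hne : ∀ x ∈ S, ∀ y ∈ T, x ≠ y := by
    intro x hx y hy h
    exact Finset.disjoint_left.1 hST hx (h ▸ hy)
  set C : V → Prop := BipChain A B f g with hC
  set M : Finset (V × V) :=
    ((A.filter C).image (fun a => (a, g a))) ∪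
    ((B.filter (fun b => ∀ a ∈ A, C a → g a ≠ b)).image (fun b => (f b, b))) with hM
  -- membership characterization
  have hmem : ∀ e, e ∈ M ↔
      (∃ a, a ∈ A ∧ C a ∧ e = (a, g a)) ∨
      (∃ b, b ∈ B ∧ (∀ a ∈ A, C a → g a ≠ b) ∧ e = (f b, b)) := by
    intro e
    simp only [hM, Finset.mem_union, Finset.mem_image, Finset.mem_filter]
    constructor
    · rintro (⟨a, ⟨ha, hc⟩, rfl⟩ | ⟨b, ⟨hb, hnb⟩, rfl⟩)
      · exact Or.inl ⟨a, ha, hc, rfl⟩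
      · exact Or.inr ⟨b, hb, hnb, rfl⟩
    · rintro (⟨a, ha, hc, rfl⟩ | ⟨b, hb, hnb, rfl⟩)
      · exact Or.inl ⟨a, ⟨ha, hc⟩, rfl⟩
      · exact Or.inr ⟨b, ⟨hb, hnb⟩, rfl⟩
  have hinv : ∀ x, C x → (∀ b ∈ B, f b ≠ x) ∨
      ∃ a, C a ∧ a ∈ A ∧ g a ∈ B ∧ x = f (g a) := by
    intro x hx
    cases hx with
    | base a ha hb => exact Or.inl hb
    | step a h ha hg => exact Or.inr ⟨a, h, ha, hg, rfl⟩
  -- key cross fact: a chain vertex cannot be the f-image of an unexcluded b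
  have hcross : ∀ b ∈ B, (∀ a ∈ A, C a → g a ≠ b) → ¬ C (f b) := by
    intro b hb hnb hc
    rcases hinv _ hc with h | ⟨a', hc', ha', hgb', heq⟩
    · exact h b hb rfl
    · have hbeq : b = g a' := hfinj (by exact hb) (by exact hgb') heq
      exact hnb a' ha' hc' hbeq.symm
  refine ⟨M, ?_, ?_, ?_⟩
  · -- M ⊆ E
    intro e he
    rcases (hmem e).1 he with ⟨a, ha, _, rfl⟩ | ⟨b, hb, _, rfl⟩
    · exact hgE a ha
    · exact hfE b hb
  · -- matching
    intro e he e' he' hnee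
    rcases (hmem e).1 he with ⟨a, ha, hc, rfl⟩ | ⟨b, hb, hnb, rfl⟩ <;>
      rcases (hmem e').1 he' with ⟨a', ha', hc', rfl⟩ | ⟨b', hb', hnb', rfl⟩
    · have haa : a ≠ a' := fun h => hnee (by rw [h])
      exact ⟨haa, fun h => haa (hginj (by exact ha) (by exact ha') h),
        hne a (hAS ha) (g a') (hgT a' ha'),
        fun h => hne a' (hAS ha') (g a) (hgT a ha) h.symm⟩
    · exact ⟨fun h => hcross b' hb' hnb' (by rw [← show (a:V) = f b' from h]; exact hc),
        fun h => hnb' a ha hc h,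
        hne a (hAS ha) b' (hBT hb'),
        fun h => hne (f b') (hfS b' hb') (g a) (hgT a ha) h.symm⟩
    · exact ⟨fun h => hcross b hb hnb (by rw [show f b = a' from h]; exact hc'),
        fun h => hnb a' ha' hc' h.symm,
        hne (f b) (hfS b hb) (g a') (hgT a' ha'),
        fun h => hne a' (hAS ha') b (hBT hb) h.symm⟩
    · have hbb : b ≠ b' := fun h => hnee (by rw [h])
      exact ⟨fun h => hbb (hfinj (by exact hb) (by exact hb') h), hbb,
        fun h => hne (f b) (hfS b hb) b' (hBT hb') h,
        fun h => hne (f b') (hfS b' hb') b (hBT hb) h.symm⟩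
  · -- coverage
    intro v hv hmax
    rcases Finset.mem_union.1 hv with hvS | hvT
    · -- v ∈ A
      have hvA : v ∈ A := Finset.mem_filter.2 ⟨hvS, hmax⟩
      by_cases hc : C v
      · exact ⟨(v, g v), (hmem _).2 (Or.inl ⟨v, hvA, hc, rfl⟩), Or.inl rfl⟩
      · -- v is the f-image of some b ∈ B
        have hb : ∃ b ∈ B, f b = v := by
          by_contra h
          push_neg at h
          exact hc (BipChain.base v hvA h)
        obtain ⟨b, hbB, hfb⟩ := hb
        have hnb : ∀ a ∈ A, C a → g a ≠ b := by
          intro a ha hca hgab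
          exact hc (hfb ▸ hgab ▸ BipChain.step a hca ha (hgab ▸ hbB))
        exact ⟨(f b, b), (hmem _).2 (Or.inr ⟨b, hbB, hnb, rfl⟩), Or.inl hfb⟩
    · -- v ∈ B
      have hvB : v ∈ B := Finset.mem_filter.2 ⟨hvT, hmax⟩
      by_cases hex : ∀ a ∈ A, C a → g a ≠ v
      · exact ⟨(f v, v), (hmem _).2 (Or.inr ⟨v, hvB, hex, rfl⟩), Or.inr rfl⟩
      · push_neg at hex
        obtain ⟨a, ha, hca, hgav⟩ := hex
        exact ⟨(a, g a), (hmem _).2 (Or.inl ⟨a, ha, hca, rfl⟩), Or.inr hgav⟩
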